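/- Let a, c ∈ ℂ and b, z, w ∈ ℂ with Re b > 0 and |w| < Re z. Define the regularized confluent series ₁𝐅₁(a;c;u) = Σ_{n=0}^∞ (a)_n uⁿ / (Γ(c+n) n!) (an entire function of u) and the regularized hypergeometric series ₂𝐅₁(a,b;c;u) = Σ_{n=0}^∞ (a)_n (b)_n uⁿ / (Γ(c+n) n!) for |u| < 1, where (a)_n = a(a+1)⋯(a+n−1) is the ascending factorial (Pochhammer symbol). Then the function x ↦ x^{b−1} e^{−zx} ₁𝐅₁(a;c;wx) is integrable on (0,∞), |w/z| < 1, and ∫₀^∞ x^{b−1} e^{−zx} ₁𝐅₁(a;c;wx) dx = z^{−b} Γ(b) ₂𝐅₁(a, b; c; w/z), with z^{−b} the principal branch. -/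

import Mathlib

open MeasureTheory Set Filter Topology ENNReal NNReal

/-- The Pochhammer symbol (ascending factorial) `(a)_n = a(a+1)⋯(a+n−1)`. -/
noncomputable def poch (a : ℂ) (n : ℕ) : ℂ := ∏ k ∈ Finset.range n, (a + k)



lemma integrableOn_aux {p q : ℝ} (hp : -1 < p) (hq : 0 < q) :
    IntegrableOn (fun x : ℝ => x ^ p * Real.exp (-(q * x))) (Set.Ioi 0) := by
  have := integrableOn_rpow_mul_exp_neg_mul_rpow hp zero_lt_one hq
  refine this.congr_fun (fun x hx => ?_) measurableSet_Ioi
  simp only [Real.rpow_one, neg_mul]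

lemma meas_aux (s z : ℂ) :
    AEStronglyMeasurable (fun t : ℝ => (t:ℂ) ^ s * Complex.exp (-(z * t)))
      (volume.restrict (Set.Ioi 0)) := by
  refine (ContinuousOn.mul (fun t ht => ?_) (Continuous.continuousOn (by fun_prop))).aestronglyMeasurable measurableSet_Ioi
  exact (Complex.continuousAt_ofReal_cpow_const _ _ (Or.inr (ne_of_gt ht))).continuousWithinAt

lemma norm_aux {t : ℝ} (ht : 0 < t) (s z : ℂ) :
    ‖(t:ℂ) ^ s * Complex.exp (-(z * t))‖ = t ^ s.re * Real.exp (-(z.re * t)) := by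
  rw [norm_mul,
    Complex.norm_cpow_eq_rpow_re_of_pos ht, Complex.norm_exp]
  congr 2
  simp [Complex.mul_re]

lemma cpow_exp_integral {s : ℂ} (hs : 0 < s.re) {z : ℂ} (hz : 0 < z.re) :
    ∫ t in Set.Ioi (0:ℝ), (t:ℂ) ^ (s - 1) * Complex.exp (-(z * t)) =
      (1 / z) ^ s * Complex.Gamma s := by
  set U : Set ℂ := {z | 0 < z.re} with hU
  have hUo : IsOpen U := isOpen_lt continuous_const Complex.continuous_re
  set f : ℂ → ℂ := fun z => ∫ t in Set.Ioi (0:ℝ), (t:ℂ) ^ (s - 1) * Complex.exp (-(z * t))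
  set g : ℂ → ℂ := fun z => (1 / z) ^ s * Complex.Gamma s
  -- differentiability of f on U
  have hf : ∀ z₀ ∈ U, HasDerivAt f (∫ t in Set.Ioi (0:ℝ),
      -((t:ℂ) ^ s * Complex.exp (-(z₀ * t)))) z₀ := by
    intro z₀ hz₀
    have hρ : 0 < z₀.re := hz₀
    have hε : 0 < z₀.re / 2 := by linarith
    have key := hasDerivAt_integral_of_dominated_loc_of_deriv_le (μ := volume.restrict (Ioi 0))
      (F := fun z (t : ℝ) => (t:ℂ) ^ (s - 1) * Complex.exp (-(z * t)))
      (F' := fun z (t : ℝ) => -((t:ℂ) ^ s * Complex.exp (-(z * t))))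
      (x₀ := z₀) (bound := fun t : ℝ => t ^ s.re * Real.exp (-(z₀.re / 2 * t))) (Metric.ball_mem_nhds _ hε)
      (Eventually.of_forall fun z => meas_aux _ _) ?_ ((meas_aux s z₀).neg) ?_ ?_ ?_
    · exact key.2
    · -- integrability of F z₀
      refine (integrableOn_aux (p := s.re - 1) (by linarith) hρ).mono' (meas_aux _ _) ?_
      filter_upwards [ae_restrict_mem measurableSet_Ioi] with t ht
      rw [norm_aux ht, Complex.sub_re, Complex.one_re]
    · -- bound
      filter_upwards [ae_restrict_mem measurableSet_Ioi] with t ht z hzb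
      rw [mem_Ioi] at ht
      rw [norm_neg, norm_aux ht]
      have hzr : z₀.re / 2 ≤ z.re := by
        have hb := mem_ball_iff_norm.mp hzb
        have h2 : |z.re - z₀.re| < z₀.re / 2 := by
          calc |z.re - z₀.re| = |(z - z₀).re| := by rw [Complex.sub_re]
          _ ≤ ‖z - z₀‖ := Complex.abs_re_le_norm _
          _ < _ := hb
        rcases abs_lt.mp h2 with ⟨h, l⟩
        linarith
      refine mul_le_mul_of_nonneg_left ?_ (Real.rpow_nonneg ht.le _)
      exact Real.exp_le_exp.mpr (by nlinarith)
    · exact integrableOn_aux (by linarith) hε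
    · -- differentiability in z
      filter_upwards [ae_restrict_mem measurableSet_Ioi] with t ht z hzb
      rw [mem_Ioi] at ht
      have h1 : HasDerivAt (fun z : ℂ => Complex.exp (-(z * t)))
          (Complex.exp (-(z * t)) * (-(t:ℂ))) z := by
        have : HasDerivAt (fun z : ℂ => -(z * t)) (-(t:ℂ)) z := by
          exact (by simpa using ((hasDerivAt_id z).mul_const (t:ℂ)).neg :
            HasDerivAt (-fun y : ℂ => y * t) (-(t:ℂ)) z)
        exact this.cexp
      have := h1.const_mul ((t:ℂ) ^ (s - 1))
      refine this.congr_deriv ?_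
      have ht0 : (t:ℂ) ≠ 0 := Complex.ofReal_ne_zero.mpr (ne_of_gt ht)
      have hts : (t:ℂ) ^ (s - 1) = (t:ℂ) ^ s / t := by
        rw [Complex.cpow_sub _ _ ht0, Complex.cpow_one]
      rw [hts]
      field_simp
  have hfd : AnalyticOnNhd ℂ f U :=
    DifferentiableOn.analyticOnNhd
      (fun z hz => (hf z hz).differentiableAt.differentiableWithinAt) hUo
  have hgd : AnalyticOnNhd ℂ g U := by
    refine DifferentiableOn.analyticOnNhd (fun z hz => DifferentiableAt.differentiableWithinAt ?_) hUo
    have hz0 : z ≠ 0 := by rintro rfl; rw [hU] at hz; simpa using hz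
    refine ((differentiableAt_const (1:ℂ)).div differentiableAt_id hz0).cpow
      (differentiableAt_const s) ?_ |>.mul_const _
    rw [Complex.mem_slitPlane_iff]
    left
    show 0 < (1 / z).re
    rw [one_div, Complex.inv_re]
    exact div_pos hz (Complex.normSq_pos.mpr hz0)
  have heq : EqOn f g U := by
    refine hfd.eqOn_of_preconnected_of_frequently_eq hgd
      ((convex_halfSpace_re_gt 0).isPreconnected) (show (1:ℂ) ∈ U by norm_num [hU]) ?_
    have hseq : Tendsto (fun n : ℕ => ((1 + ((n:ℝ)+1)⁻¹ : ℝ) : ℂ)) atTop (𝓝[≠] 1) := by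
      refine tendsto_nhdsWithin_of_tendsto_nhds_of_eventually_within _ ?_ ?_
      · have h0 : Tendsto (fun n : ℕ => ((n:ℝ)+1)⁻¹) atTop (𝓝 0) := by
          simpa [one_div] using tendsto_one_div_add_atTop_nhds_zero_nat (𝕜 := ℝ)
        have h1 : Tendsto (fun n : ℕ => (1 + ((n:ℝ)+1)⁻¹ : ℝ)) atTop (𝓝 1) := by
          have := (tendsto_const_nhds (x := (1:ℝ)) (f := atTop)).add h0
          rwa [add_zero] at this
        exact (Complex.continuous_ofReal.tendsto 1).comp h1
      · refine Eventually.of_forall fun n => ?_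
        simp only [mem_compl_iff, mem_singleton_iff]
        intro h
        have : (1 + ((n:ℝ)+1)⁻¹ : ℝ) = 1 := by exact_mod_cast h
        have hpos : (0:ℝ) < ((n:ℝ)+1)⁻¹ := by positivity
        linarith
    refine hseq.frequently (Frequently.of_forall fun n => ?_)
    have hr : (0:ℝ) < 1 + ((n:ℝ)+1)⁻¹ := by positivity
    simpa [f, g] using Complex.integral_cpow_mul_exp_neg_mul_Ioi hs hr
  exact heq hz


-- ratio-test summability helper
lemma summable_ratio_lim {f q : ℕ → ℝ} {L : ℝ} (hpos : ∀ n, 0 ≤ f n) (hL : L < 1)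
    (hq : Tendsto q atTop (𝓝 L))
    (hrec : ∀ᶠ n in atTop, f (n + 1) = q n * f n) : Summable f := by
  have hr1 : (L + 1) / 2 < 1 := by linarith
  have hLr : L < (L + 1) / 2 := by linarith
  refine summable_of_ratio_norm_eventually_le hr1 ?_
  filter_upwards [hrec, hq.eventually_le_const hLr] with n h1 h2
  rw [Real.norm_of_nonneg (hpos _), Real.norm_of_nonneg (hpos _), h1]
  exact mul_le_mul_of_nonneg_right h2 (hpos n)

lemma natCast_add_ne {c : ℂ} {n : ℕ} (h : 0 < c.re + n) : c + n ≠ 0 := by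
  intro h0
  have : (c + (n:ℂ)).re = 0 := by rw [h0]; simp
  rw [Complex.add_re, Complex.natCast_re] at this
  linarith

-- recurrence for the absolute coefficients
lemma Kabs_rec (a c w : ℂ) {n : ℕ} (hn : 0 < c.re + n) :
    ‖poch a (n+1)‖ * ‖w‖ ^ (n+1) /
        (‖Complex.Gamma (c + (n+1:ℕ))‖ * (n+1).factorial) =
      (‖a + n‖ * ‖w‖ / (‖c + n‖ * (n+1))) *
        (‖poch a n‖ * ‖w‖ ^ n /
          (‖Complex.Gamma (c + n)‖ * n.factorial)) := by
  have hcn : c + (n:ℂ) ≠ 0 := natCast_add_ne hn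
  have hG : Complex.Gamma (c + (n+1:ℕ)) = (c + n) * Complex.Gamma (c + n) := by
    rw [show (c + (n+1:ℕ) : ℂ) = (c + n) + 1 by push_cast; ring]
    exact Complex.Gamma_add_one _ hcn
  have hp : poch a (n+1) = poch a n * (a + n) := Finset.prod_range_succ _ _
  rw [hG, hp, norm_mul, norm_mul, pow_succ, Nat.factorial_succ]
  have hc0 : ‖c + n‖ ≠ 0 := by simpa using hcn
  rcases eq_or_ne (‖Complex.Gamma (c + (n:ℕ))‖) 0 with h | h
  · simp [h, hc0]
  · have hf : ((n:ℝ)+1) ≠ 0 := by positivity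
    have hfn : (n.factorial : ℝ) ≠ 0 := Nat.cast_ne_zero.mpr n.factorial_ne_zero
    field_simp
    push_cast
    ring

lemma tendsto_abs_ratio (a c : ℂ) :
    Tendsto (fun n : ℕ => ‖a + n‖ / ‖c + n‖) atTop (𝓝 1) := by
  have hnorm : Tendsto (fun n : ℕ => ‖c + (n:ℂ)‖) atTop atTop := by
    refine tendsto_atTop_mono (fun n => ?_) (tendsto_atTop_add_const_right atTop (-‖c‖)
      tendsto_natCast_atTop_atTop)
    have : ‖(n:ℂ)‖ ≤ ‖c + n‖ + ‖c‖ := by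
      calc ‖(n:ℂ)‖ = ‖(c + n) + (-c)‖ := by ring_nf
      _ ≤ ‖c + n‖ + ‖-c‖ := norm_add_le _ _
      _ = ‖c + n‖ + ‖c‖ := by rw [norm_neg]
    have hn : ‖(n:ℂ)‖ = (n:ℝ) := by simp
    linarith [this, hn.symm.le]
  have hinv : Tendsto (fun n : ℕ => (c + (n:ℂ))⁻¹) atTop (𝓝 0) := by
    rw [tendsto_zero_iff_norm_tendsto_zero]
    simpa [norm_inv, Pi.inv_def] using hnorm.inv_tendsto_atTop
  have h1 : Tendsto (fun n : ℕ => (a + n) / (c + n)) atTop (𝓝 1) := by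
    have h2 : Tendsto (fun n : ℕ => 1 + (a - c) * (c + (n:ℂ))⁻¹) atTop (𝓝 1) := by
      have := (tendsto_const_nhds (x := (1:ℂ)) (f := atTop)).add
        ((tendsto_const_nhds (x := (a - c)) (f := atTop)).mul hinv)
      simpa using this
    refine h2.congr' ?_
    have hev : ∀ᶠ n : ℕ in atTop, 0 < c.re + n := by
      obtain ⟨N, hN⟩ := exists_nat_gt (-c.re)
      filter_upwards [eventually_ge_atTop N] with n hn
      have : (-c.re) < N := hN
      have : (N:ℝ) ≤ n := Nat.cast_le.mpr hn
      linarith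
    filter_upwards [hev] with n hn
    have hcn : c + (n:ℂ) ≠ 0 := natCast_add_ne hn
    field_simp
    ring
  have h3 := (continuous_norm.tendsto (1:ℂ)).comp h1
  have h4 : Tendsto (fun n : ℕ => ‖a + n‖ / ‖c + n‖) atTop
      (𝓝 ‖(1:ℂ)‖) := h3.congr fun n => norm_div _ _
  simpa using h4

lemma Gamma_add_nat {b : ℂ} (hb : 0 < b.re) (n : ℕ) :
    Complex.Gamma (b + n) = poch b n * Complex.Gamma b := by
  induction n with
  | zero => simp [poch]
  | succ n ih =>
    have hbn : b + (n:ℂ) ≠ 0 := natCast_add_ne (by positivity)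
    calc Complex.Gamma (b + (n+1:ℕ))
        = Complex.Gamma ((b + n) + 1) := by push_cast; ring_nf
      _ = (b + n) * Complex.Gamma (b + n) := Complex.Gamma_add_one _ hbn
      _ = (b + n) * (poch b n * Complex.Gamma b) := by rw [ih]
      _ = poch b (n+1) * Complex.Gamma b := by
          rw [show poch b (n+1) = poch b n * (b + n) from Finset.prod_range_succ _ _]; ring


/-- The regularized confluent hypergeometric function
`₁𝐅₁(a;c;u) = Σ (a)_n uⁿ / (Γ(c+n) n!)`. -/
noncomputable def regConfluent (a c u : ℂ) : ℂ :=
  ∑' n : ℕ, poch a n * u ^ n / (Complex.Gamma (c + n) * (n.factorial : ℂ))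

/-- The regularized Gauss hypergeometric function
`₂𝐅₁(a,b;c;u) = Σ (a)_n (b)_n uⁿ / (Γ(c+n) n!)`. -/
noncomputable def regHypergeom (a b c u : ℂ) : ℂ :=
  ∑' n : ℕ, poch a n * poch b n * u ^ n / (Complex.Gamma (c + n) * (n.factorial : ℂ))

/-- Laplace-type integral transform of the confluent function into the Gauss
hypergeometric function: for `Re b > 0` and `|w| < Re z`,
`∫₀^∞ x^{b−1} e^{−zx} ₁𝐅₁(a;c;wx) dx = z^{−b} Γ(b) ₂𝐅₁(a,b;c;w/z)`. -/
theorem confluent_laplace_transform (a c b z w : ℂ)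
    (hb : 0 < b.re) (hw : ‖w‖ < z.re) :
    IntegrableOn
        (fun x : ℝ => (x : ℂ) ^ (b - 1) * Complex.exp (-(z * x)) * regConfluent a c (w * x))
        (Set.Ioi 0) ∧
      ‖w / z‖ < 1 ∧
      (∫ x in Set.Ioi (0 : ℝ),
          (x : ℂ) ^ (b - 1) * Complex.exp (-(z * x)) * regConfluent a c (w * x)) =
        z ^ (-b) * Complex.Gamma b * regHypergeom a b c (w / z) := by
  have hσ : 0 < z.re := (norm_nonneg w).trans_lt hw
  have hz0 : z ≠ 0 := fun h => by rw [h] at hσ; simp at hσ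
  have hwz : ‖w / z‖ < 1 := by
    rw [norm_div]
    exact (div_lt_one (norm_pos_iff.mpr hz0)).mpr (hw.trans_le (Complex.re_le_norm z))
  -- the coefficients and summands
  set K : ℕ → ℂ := fun n => poch a n * w ^ n / (Complex.Gamma (c + n) * (n.factorial : ℂ))
    with hK
  set F : ℕ → ℝ → ℂ := fun n x => K n * ((x:ℂ) ^ (b + n - 1) * Complex.exp (-(z * x)))
    with hF
  set Kabs : ℕ → ℝ := fun n => ‖poch a n‖ * ‖w‖ ^ n /
    (‖Complex.Gamma (c + n)‖ * n.factorial) with hKabs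
  have hKabs_eq : ∀ n, ‖K n‖ = Kabs n := by
    intro n
    rw [hK, hKabs]
    simp [norm_div, norm_mul, norm_pow]
  have hbn_re : ∀ n : ℕ, 0 < (b + n).re := by
    intro n
    rw [Complex.add_re, Complex.natCast_re]
    positivity
  have hre1 : ∀ n : ℕ, (b + n - 1).re = b.re + n - 1 := by
    intro n
    rw [Complex.sub_re, Complex.add_re, Complex.natCast_re, Complex.one_re]
  -- norm of summands
  have hnormF : ∀ n, ∀ x ∈ Ioi (0:ℝ), ‖F n x‖ =
      Kabs n * (x ^ (b.re + n - 1) * Real.exp (-(z.re * x))) := by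
    intro n x hx
    rw [mem_Ioi] at hx
    rw [hF]
    simp only [norm_mul]
    rw [show ‖K n‖ = ‖K n‖ from rfl, hKabs_eq,
      ← norm_mul, norm_aux hx, hre1]
  -- integrability of each summand
  have hFint : ∀ n, Integrable (F n) (volume.restrict (Ioi 0)) := by
    intro n
    refine Integrable.const_mul ?_ (K n)
    have hexp : (-1:ℝ) < b.re + n - 1 := by
      have := hbn_re n
      rw [Complex.add_re, Complex.natCast_re] at this
      linarith
    refine (integrableOn_aux (p := b.re + n - 1) hexp hσ).mono' (meas_aux _ _) ?_
    filter_upwards [ae_restrict_mem measurableSet_Ioi] with x hx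
    rw [mem_Ioi] at hx
    rw [norm_aux hx, hre1]
  -- value of each integral
  have hInt : ∀ n, ∫ x in Ioi (0:ℝ), F n x =
      K n * ((1 / z) ^ (b + n) * Complex.Gamma (b + n)) := by
    intro n
    rw [hF]
    simp only []
    rw [MeasureTheory.integral_const_mul]
    congr 1
    exact cpow_exp_integral (hbn_re n) hσ
  -- value of each norm integral
  have hNormInt : ∀ n, ∫ x in Ioi (0:ℝ), ‖F n x‖ =
      Kabs n * ((1 / z.re) ^ (b.re + n) * Real.Gamma (b.re + n)) := by
    intro n
    rw [setIntegral_congr_fun measurableSet_Ioi (hnormF n), MeasureTheory.integral_const_mul]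
    congr 1
    exact Real.integral_rpow_mul_exp_neg_mul_Ioi (by positivity) hσ
  set B : ℕ → ℝ := fun n => Kabs n * ((1 / z.re) ^ (b.re + n) * Real.Gamma (b.re + n))
    with hB
  have hKabs_nonneg : ∀ n, 0 ≤ Kabs n := by
    intro n; rw [hKabs]; positivity
  have hB_nonneg : ∀ n, 0 ≤ B n := by
    intro n
    rw [hB]
    have := Real.Gamma_pos_of_pos (show (0:ℝ) < b.re + n by positivity)
    have := hKabs_nonneg n
    positivity
  have h0inv : Tendsto (fun n : ℕ => ((n:ℝ)+1)⁻¹) atTop (𝓝 0) := by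
    simpa [one_div] using tendsto_one_div_add_atTop_nhds_zero_nat (𝕜 := ℝ)
  have hev : ∀ᶠ n : ℕ in atTop, 0 < c.re + n := by
    obtain ⟨N, hN⟩ := exists_nat_gt (-c.re)
    filter_upwards [eventually_ge_atTop N] with n hn
    have h1 : (-c.re) < N := hN
    have h2 : (N:ℝ) ≤ n := Nat.cast_le.mpr hn
    linarith
  -- summability of the norm integrals
  have hBsum : Summable B := by
    set q : ℕ → ℝ := fun n => (‖a + n‖ / ‖c + n‖) *
      ((b.re + n) / ((n:ℝ) + 1)) * (‖w‖ / z.re) with hq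
    have ht2 : Tendsto (fun n : ℕ => (b.re + n) / ((n:ℝ) + 1)) atTop (𝓝 1) := by
      have := (tendsto_const_nhds (x := (1:ℝ)) (f := atTop)).add (h0inv.const_mul (b.re - 1))
      rw [mul_zero, add_zero] at this
      refine this.congr fun n => ?_
      have hne : ((n:ℝ) + 1) ≠ 0 := by positivity
      field_simp
      ring
    have hqt : Tendsto q atTop (𝓝 (‖w‖ / z.re)) := by
      have := ((tendsto_abs_ratio a c).mul ht2).mul
        (tendsto_const_nhds (x := ‖w‖ / z.re) (f := atTop))
      rwa [one_mul, one_mul] at this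
    have hL : ‖w‖ / z.re < 1 := (div_lt_one hσ).mpr hw
    refine summable_ratio_lim hB_nonneg hL hqt ?_
    filter_upwards [hev] with n hn
    have hKrec := Kabs_rec a c w hn
    have hrpow : (1 / z.re) ^ (b.re + ((n:ℝ)+1)) = (1 / z.re) ^ (b.re + n) * (1 / z.re) := by
      rw [show b.re + ((n:ℝ)+1) = (b.re + n) + 1 by ring, Real.rpow_add (by positivity),
        Real.rpow_one]
    have hGrec : Real.Gamma (b.re + ((n:ℝ)+1)) = (b.re + n) * Real.Gamma (b.re + n) := by
      rw [show b.re + ((n:ℝ)+1) = (b.re + n) + 1 by ring]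
      exact Real.Gamma_add_one (by positivity)
    have hcast : (((n:ℕ)+1 : ℕ) : ℝ) = (n:ℝ) + 1 := by push_cast; ring
    rw [hB, hq]
    simp only []
    rw [hKabs]
    simp only []
    rw [hcast, hrpow, hGrec, hKrec]
    rcases eq_or_ne (‖Complex.Gamma (c + (n:ℕ))‖) 0 with hG0 | hG0
    · simp [hG0]
    · have hcn0 : ‖c + (n:ℂ)‖ ≠ 0 := by simpa using natCast_add_ne hn
      have hfn : (n.factorial : ℝ) ≠ 0 := Nat.cast_ne_zero.mpr n.factorial_ne_zero
      have hn1 : ((n:ℝ) + 1) ≠ 0 := by positivity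
      field_simp
  -- pointwise summability
  have hsumF : ∀ x ∈ Ioi (0:ℝ), Summable (fun n => ‖F n x‖) := by
    intro x hx
    have hx0 : (0:ℝ) < x := hx
    set q : ℕ → ℝ := fun n => (‖a + n‖ / ‖c + n‖) *
      ((‖w‖ * x) / ((n:ℝ) + 1)) with hq
    have hqt : Tendsto q atTop (𝓝 0) := by
      have := (tendsto_abs_ratio a c).mul (h0inv.const_mul (‖w‖ * x))
      rw [mul_zero, one_mul] at this
      refine this.congr fun n => ?_
      rw [hq]
      ring
    refine summable_ratio_lim (fun n => norm_nonneg _) one_pos hqt ?_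
    filter_upwards [hev] with n hn
    have hKrec := Kabs_rec a c w hn
    rw [hnormF (n+1) x hx, hnormF n x hx]
    have hcast : (((n:ℕ)+1 : ℕ) : ℝ) = (n:ℝ) + 1 := by push_cast; ring
    have hrpow : x ^ (b.re + (((n:ℕ)+1:ℕ):ℝ) - 1) = x ^ (b.re + n - 1) * x := by
      rw [hcast, show b.re + ((n:ℝ)+1) - 1 = (b.re + n - 1) + 1 by ring,
        Real.rpow_add hx0, Real.rpow_one]
    rw [hKabs]
    simp only []
    rw [hrpow, hKrec, hq]
    rcases eq_or_ne (‖Complex.Gamma (c + (n:ℕ))‖) 0 with hG0 | hG0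
    · simp [hG0]
    · have hcn0 : ‖c + (n:ℂ)‖ ≠ 0 := by simpa using natCast_add_ne hn
      have hfn : (n.factorial : ℝ) ≠ 0 := Nat.cast_ne_zero.mpr n.factorial_ne_zero
      have hn1 : ((n:ℝ) + 1) ≠ 0 := by positivity
      field_simp
  -- pointwise identity
  have hpt : ∀ x ∈ Ioi (0:ℝ),
      (x : ℂ) ^ (b - 1) * Complex.exp (-(z * x)) * regConfluent a c (w * x) =
        ∑' n, F n x := by
    intro x hx
    rw [mem_Ioi] at hx
    have hx0 : (x:ℂ) ≠ 0 := Complex.ofReal_ne_zero.mpr (ne_of_gt hx)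
    rw [regConfluent, ← _root_.tsum_mul_left]
    refine tsum_congr fun n => ?_
    have hxp : (x:ℂ) ^ (b + n - 1) = (x:ℂ) ^ (b - 1) * (x:ℂ) ^ n := by
      rw [show b + (n:ℂ) - 1 = (b - 1) + n by ring, Complex.cpow_add _ _ hx0,
        Complex.cpow_natCast]
    rw [hF, hK]
    simp only []
    rw [hxp, mul_pow]
    ring
  -- measurability of the sum
  have hmeas : AEStronglyMeasurable (fun x => ∑' n, F n x) (volume.restrict (Ioi 0)) := by
    refine aestronglyMeasurable_of_tendsto_ae atTop
      (f := fun N x => ∑ n ∈ Finset.range N, F n x)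
      (fun N => Finset.aestronglyMeasurable_fun_sum _ fun n _ => (hFint n).aestronglyMeasurable) ?_
    filter_upwards [ae_restrict_mem measurableSet_Ioi] with x hx
    exact ((hsumF x hx).of_norm).hasSum.tendsto_sum_nat
  -- integrability of the sum
  have hint : Integrable (fun x => ∑' n, F n x) (volume.restrict (Ioi 0)) := by
    refine ⟨hmeas, ?_⟩
    show (∫⁻ x, (‖(∑' n, F n x)‖₊ : ℝ≥0∞) ∂(volume.restrict (Ioi 0))) < ⊤
    have step1 : (∫⁻ x, (‖(∑' n, F n x)‖₊ : ℝ≥0∞) ∂(volume.restrict (Ioi 0))) ≤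
        ∫⁻ x, (∑' n, (‖F n x‖₊ : ℝ≥0∞)) ∂(volume.restrict (Ioi 0)) := by
      refine lintegral_mono_ae ?_
      filter_upwards [ae_restrict_mem measurableSet_Ioi] with x hx
      have hnn : Summable fun n => ‖F n x‖₊ := by
        rw [← NNReal.summable_coe]
        simpa [coe_nnnorm] using hsumF x hx
      calc (‖(∑' n, F n x)‖₊ : ℝ≥0∞) ≤ ((∑' n, ‖F n x‖₊ : ℝ≥0) : ℝ≥0∞) :=
            ENNReal.coe_le_coe.2 (nnnorm_tsum_le hnn)
        _ = ∑' n, (‖F n x‖₊ : ℝ≥0∞) := ENNReal.coe_tsum hnn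
    have step2 : ∫⁻ x, (∑' n, (‖F n x‖₊ : ℝ≥0∞)) ∂(volume.restrict (Ioi 0)) =
        ∑' n, ∫⁻ x, (‖F n x‖₊ : ℝ≥0∞) ∂(volume.restrict (Ioi 0)) :=
      lintegral_tsum fun n => (hFint n).aestronglyMeasurable.enorm
    have step3 : ∀ n, ∫⁻ x, (‖F n x‖₊ : ℝ≥0∞) ∂(volume.restrict (Ioi 0)) =
        ENNReal.ofReal (B n) := by
      intro n
      rw [hB]
      simp only []
      rw [← hNormInt n]
      rw [ofReal_integral_eq_lintegral_ofReal (hFint n).norm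
        (Eventually.of_forall fun x => norm_nonneg _)]
      simp_rw [ofReal_norm, enorm_eq_nnnorm]
    calc (∫⁻ x, (‖(∑' n, F n x)‖₊ : ℝ≥0∞) ∂(volume.restrict (Ioi 0)))
        ≤ ∑' n, ∫⁻ x, (‖F n x‖₊ : ℝ≥0∞) ∂(volume.restrict (Ioi 0)) := step1.trans step2.le
      _ = ∑' n, ENNReal.ofReal (B n) := by exact tsum_congr step3
      _ = ENNReal.ofReal (∑' n, B n) := (ENNReal.ofReal_tsum_of_nonneg hB_nonneg hBsum).symm
      _ < ⊤ := ENNReal.ofReal_lt_top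
  have hIntOn : IntegrableOn
      (fun x : ℝ => (x : ℂ) ^ (b - 1) * Complex.exp (-(z * x)) * regConfluent a c (w * x))
      (Set.Ioi 0) := by
    refine hint.congr ?_
    filter_upwards [ae_restrict_mem measurableSet_Ioi] with x hx
    exact (hpt x hx).symm
  refine ⟨hIntOn, hwz, ?_⟩
  have hargz : z.arg ≠ Real.pi := by
    intro h
    rw [Complex.arg_eq_pi_iff] at h
    linarith [h.1]
  have hsummableNorm : Summable fun n => ∫ x in Ioi (0:ℝ), ‖F n x‖ :=
    hBsum.congr fun n => (hNormInt n).symm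
  have termeq : ∀ n : ℕ, K n * ((1 / z) ^ (b + n) * Complex.Gamma (b + n)) =
      z ^ (-b) * Complex.Gamma b *
        (poch a n * poch b n * (w / z) ^ n / (Complex.Gamma (c + n) * (n.factorial : ℂ))) := by
    intro n
    have h1 : (1 / z : ℂ) ^ (b + (n:ℂ)) = z ^ (-b) * (1 / z) ^ n := by
      rw [Complex.cpow_add _ _ (one_div_ne_zero hz0), Complex.cpow_natCast]
      congr 1
      rw [one_div, Complex.inv_cpow _ _ hargz, ← Complex.cpow_neg]
    have h2 : (w / z) ^ n = w ^ n * (1 / z) ^ n := by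
      rw [div_eq_mul_one_div, mul_pow]
    rw [Gamma_add_nat hb n, hK, h1, h2]
    simp only []
    ring
  calc (∫ x in Set.Ioi (0:ℝ),
        (x : ℂ) ^ (b - 1) * Complex.exp (-(z * x)) * regConfluent a c (w * x))
      = ∫ x in Ioi (0:ℝ), ∑' n, F n x := setIntegral_congr_fun measurableSet_Ioi hpt
    _ = ∑' n, ∫ x in Ioi (0:ℝ), F n x :=
        (integral_tsum_of_summable_integral_norm hFint hsummableNorm).symm
    _ = ∑' n, K n * ((1 / z) ^ (b + n) * Complex.Gamma (b + n)) := tsum_congr hInt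
    _ = ∑' n, z ^ (-b) * Complex.Gamma b *
          (poch a n * poch b n * (w / z) ^ n / (Complex.Gamma (c + n) * (n.factorial : ℂ))) :=
        tsum_congr termeq
    _ = z ^ (-b) * Complex.Gamma b * regHypergeom a b c (w / z) := by
        rw [regHypergeom, _root_.tsum_mul_left]
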